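/- Let ψ : (α,β) → (0,∞) be a second continuous function, with associated spaces C_ψ^{(∞)} defined using Y := ψ∂_t. If φ/ψ extends to a function on [α,β] belonging to C_ψ^{(∞)} and ψ/φ extends to a function on [α,β] belonging to C_φ^{(∞)}, then C_φ^{(∞)} = C_ψ^{(∞)}. -/

import Mathlib

open Real Set Filter Topology

def EI (α β : EReal) : Set ℝ := {x : ℝ | α < (x : EReal) ∧ (x : EReal) < β}

def ContExt (α β : EReal) (u : ℝ → ℝ) : Prop :=
  ∃ g : EReal → ℝ, ContinuousOn g (Set.Icc α β) ∧
    ∀ x : ℝ, x ∈ EI α β → g (x : EReal) = u x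

noncomputable def Xop (φ u : ℝ → ℝ) : ℝ → ℝ := fun x => φ x * deriv u x

noncomputable def Xiter (φ : ℝ → ℝ) : ℕ → (ℝ → ℝ) → (ℝ → ℝ)
  | 0, u => u
  | n + 1, u => Xop φ (Xiter φ n u)

def CN (α β : EReal) (φ : ℝ → ℝ) : ℕ → Set (ℝ → ℝ)
  | 0 => {u | ContExt α β u}
  | n + 1 => {u | u ∈ CN α β φ n ∧
      (∀ x ∈ EI α β, DifferentiableAt ℝ (Xiter φ n u) x) ∧
      ContExt α β (Xiter φ (n + 1) u)}

def Cinf (α β : EReal) (φ : ℝ → ℝ) : Set (ℝ → ℝ) := ⋂ n : ℕ, CN α β φ n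

def CNE (α β : EReal) (φ : ℝ → ℝ) (n : ℕ∞) : Set (ℝ → ℝ) :=
  WithTop.recTopCoe (Cinf α β φ) (fun k => CN α β φ k) n

/- ### auxiliary lemmas -/

lemma EI_isOpen (α β : EReal) : IsOpen (EI α β) := by
  have h : EI α β = (fun x : ℝ => (x : EReal)) ⁻¹' (Set.Ioo α β) := rfl
  rw [h]
  exact isOpen_Ioo.preimage continuous_coe_real_ereal

lemma eqOn_eventuallyEq {α β : EReal} {f g : ℝ → ℝ} (h : Set.EqOn f g (EI α β))
    {x : ℝ} (hx : x ∈ EI α β) : f =ᶠ[nhds x] g :=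
  h.eventuallyEq_of_mem ((EI_isOpen α β).mem_nhds hx)

lemma contExt_congr {α β : EReal} {f g : ℝ → ℝ} (h : Set.EqOn f g (EI α β))
    (hg : ContExt α β g) : ContExt α β f := by
  obtain ⟨G, hGc, hGe⟩ := hg
  exact ⟨G, hGc, fun x hx => (hGe x hx).trans (h hx).symm⟩

lemma contExt_zero (α β : EReal) : ContExt α β (fun _ => 0) :=
  ⟨fun _ => 0, continuousOn_const, fun _ _ => rfl⟩

lemma contExt_mul_add {α β : EReal} {u v w : ℝ → ℝ} (hu : ContExt α β u)
    (hv : ContExt α β v) (hw : ContExt α β w) :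
    ContExt α β (fun x => u x * v x + w x) := by
  obtain ⟨G, hGc, hGe⟩ := hu
  obtain ⟨H, hHc, hHe⟩ := hv
  obtain ⟨K, hKc, hKe⟩ := hw
  refine ⟨fun e => G e * H e + K e, (hGc.mul hHc).add hKc, fun x hx => ?_⟩
  show G x * H x + K x = u x * v x + w x
  rw [hGe x hx, hHe x hx, hKe x hx]

lemma Xiter_shuffle (φ u : ℝ → ℝ) : ∀ n, Xiter φ n (Xop φ u) = Xiter φ (n + 1) u
  | 0 => rfl
  | (n + 1) => by
      show Xop φ (Xiter φ n (Xop φ u)) = Xop φ (Xiter φ (n + 1) u)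
      rw [Xiter_shuffle φ u n]

lemma mem_CN_succ {α β : EReal} {w u : ℝ → ℝ} {n : ℕ} :
    u ∈ CN α β w (n + 1) ↔ (u ∈ CN α β w n ∧
      (∀ x ∈ EI α β, DifferentiableAt ℝ (Xiter w n u) x) ∧
      ContExt α β (Xiter w (n + 1) u)) := Iff.rfl

lemma Xop_mem_CN (α β : EReal) (w : ℝ → ℝ) :
    ∀ n, ∀ u, u ∈ CN α β w (n + 1) → Xop w u ∈ CN α β w n
  | 0, u, h => h.2.2
  | (n + 1), u, h => by
      refine ⟨Xop_mem_CN α β w n u h.1, ?_, ?_⟩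
      · rw [Xiter_shuffle]; exact h.2.1
      · rw [Xiter_shuffle]; exact h.2.2

lemma Cinf_contExt {α β : EReal} {w u : ℝ → ℝ} (h : u ∈ Cinf α β w) :
    ContExt α β u := Set.mem_iInter.1 h 0

lemma Cinf_diff {α β : EReal} {w u : ℝ → ℝ} (h : u ∈ Cinf α β w) :
    ∀ x ∈ EI α β, DifferentiableAt ℝ u x := (Set.mem_iInter.1 h 1).2.1

lemma Xop_mem_Cinf {α β : EReal} {w u : ℝ → ℝ} (h : u ∈ Cinf α β w) :
    Xop w u ∈ Cinf α β w := by
  rw [Cinf, Set.mem_iInter] at h ⊢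
  exact fun n => Xop_mem_CN α β w n u (h (n + 1))

/- ### the key criterion -/

lemma key (α β : EReal) (w : ℝ → ℝ) (S : Set (ℝ → ℝ))
    (hC : ∀ g ∈ S, ContExt α β g)
    (hD : ∀ g ∈ S, ∀ x ∈ EI α β, DifferentiableAt ℝ g x)
    (hX : ∀ g ∈ S, ∃ g' ∈ S, Set.EqOn (Xop w g) g' (EI α β)) :
    S ⊆ Cinf α β w := by
  intro f hf
  have rep : ∀ n, ∃ g ∈ S, Set.EqOn (Xiter w n f) g (EI α β) := by
    intro n
    induction n with
    | zero => exact ⟨f, hf, fun x _ => rfl⟩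
    | succ n ih =>
        obtain ⟨g, hg, he⟩ := ih
        obtain ⟨g', hg', he'⟩ := hX g hg
        refine ⟨g', hg', fun x hx => ?_⟩
        have hd : deriv (Xiter w n f) x = deriv g x :=
          (eqOn_eventuallyEq he hx).deriv_eq
        calc Xiter w (n + 1) f x = w x * deriv (Xiter w n f) x := rfl
          _ = w x * deriv g x := by rw [hd]
          _ = g' x := he' hx
  rw [Cinf, Set.mem_iInter]
  intro n
  induction n with
  | zero => exact hC f hf
  | succ n ih =>
      obtain ⟨g, hg, he⟩ := rep n
      obtain ⟨g', hg', he'⟩ := rep (n + 1)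
      refine ⟨ih, fun x hx => ?_, contExt_congr he' (hC g' hg')⟩
      exact ((eqOn_eventuallyEq he hx).differentiableAt_iff).2 (hD g hg x hx)

/- ### sums of products machinery, for product closure -/

noncomputable def lsum : List ((ℝ → ℝ) × (ℝ → ℝ)) → (ℝ → ℝ)
  | [] => fun _ => 0
  | p :: L => fun x => p.1 x * p.2 x + lsum L x

noncomputable def lder : List ((ℝ → ℝ) × (ℝ → ℝ)) → (ℝ → ℝ)
  | [] => fun _ => 0
  | p :: L => fun x => (deriv p.1 x * p.2 x + p.1 x * deriv p.2 x) + lder L x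

noncomputable def lmap (w : ℝ → ℝ) : List ((ℝ → ℝ) × (ℝ → ℝ)) → List ((ℝ → ℝ) × (ℝ → ℝ))
  | [] => []
  | p :: L => (Xop w p.1, p.2) :: (p.1, Xop w p.2) :: lmap w L

section prodclosure

variable {α β : EReal} {w : ℝ → ℝ}

def good (α β : EReal) (w : ℝ → ℝ) (L : List ((ℝ → ℝ) × (ℝ → ℝ))) : Prop :=
  ∀ p ∈ L, p.1 ∈ Cinf α β w ∧ p.2 ∈ Cinf α β w

lemma lsum_contExt : ∀ {L}, good α β w L → ContExt α β (lsum L)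
  | [], _ => contExt_zero α β
  | p :: L, h => by
      have := lsum_contExt (fun r hr => h r (List.mem_cons_of_mem p hr))
      exact contExt_mul_add (Cinf_contExt (h p List.mem_cons_self).1)
        (Cinf_contExt (h p List.mem_cons_self).2) this

lemma lsum_diff : ∀ {L}, good α β w L → ∀ x ∈ EI α β, DifferentiableAt ℝ (lsum L) x
  | [], _, x, _ => differentiableAt_const 0
  | p :: L, h, x, hx => by
      have ih := lsum_diff (fun r hr => h r (List.mem_cons_of_mem p hr)) x hx
      have h1 := Cinf_diff (h p List.mem_cons_self).1 x hx
      have h2 := Cinf_diff (h p List.mem_cons_self).2 x hx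
      exact ((h1.mul h2).add ih : DifferentiableAt ℝ (fun y => p.1 y * p.2 y + lsum L y) x)

lemma lsum_hasDerivAt : ∀ {L}, good α β w L → ∀ x ∈ EI α β,
    HasDerivAt (lsum L) (lder L x) x
  | [], _, x, _ => hasDerivAt_const x 0
  | p :: L, h, x, hx => by
      have ih := lsum_hasDerivAt (fun r hr => h r (List.mem_cons_of_mem p hr)) x hx
      have h1 := (Cinf_diff (h p List.mem_cons_self).1 x hx).hasDerivAt
      have h2 := (Cinf_diff (h p List.mem_cons_self).2 x hx).hasDerivAt
      exact ((h1.mul h2).add ih : HasDerivAt (fun y => p.1 y * p.2 y + lsum L y) _ x)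

lemma lmap_good : ∀ {L}, good α β w L → good α β w (lmap w L)
  | [], _ => fun p hp => absurd hp List.not_mem_nil
  | p :: L, h => by
      intro r hr
      have ih := lmap_good (fun r hr => h r (List.mem_cons_of_mem p hr))
      have hp := h p List.mem_cons_self
      rcases List.mem_cons.1 hr with rfl | hr'
      · exact ⟨Xop_mem_Cinf hp.1, hp.2⟩
      · rcases List.mem_cons.1 hr' with rfl | hr''
        · exact ⟨hp.1, Xop_mem_Cinf hp.2⟩
        · exact ih _ hr''

lemma lsum_lmap (w : ℝ → ℝ) (L : List ((ℝ → ℝ) × (ℝ → ℝ))) (x : ℝ) :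
    lsum (lmap w L) x = w x * lder L x := by
  induction L with
  | nil => simp [lsum, lder, lmap]
  | cons p L ih =>
      show Xop w p.1 x * p.2 x + (p.1 x * Xop w p.2 x + lsum (lmap w L) x) =
        w x * ((deriv p.1 x * p.2 x + p.1 x * deriv p.2 x) + lder L x)
      rw [ih]
      simp only [Xop]
      ring

lemma mul_mem_Cinf {u v : ℝ → ℝ} (hu : u ∈ Cinf α β w) (hv : v ∈ Cinf α β w) :
    (fun x => u x * v x) ∈ Cinf α β w := by
  set A : Set (ℝ → ℝ) :=
    {g | ∃ L, good α β w L ∧ Set.EqOn g (lsum L) (EI α β)} with hA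
  have hsub : A ⊆ Cinf α β w := by
    apply key α β w A
    · rintro g ⟨L, hL, he⟩
      exact contExt_congr he (lsum_contExt hL)
    · rintro g ⟨L, hL, he⟩ x hx
      exact ((eqOn_eventuallyEq he hx).differentiableAt_iff).2 (lsum_diff hL x hx)
    · rintro g ⟨L, hL, he⟩
      refine ⟨lsum (lmap w L), ⟨lmap w L, lmap_good hL, fun x _ => rfl⟩, fun x hx => ?_⟩
      have hd : deriv g x = deriv (lsum L) x := (eqOn_eventuallyEq he hx).deriv_eq
      calc Xop w g x = w x * deriv (lsum L) x := by rw [Xop, hd]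
        _ = w x * lder L x := by rw [(lsum_hasDerivAt hL x hx).deriv]
        _ = lsum (lmap w L) x := (lsum_lmap w L x).symm
  apply hsub
  refine ⟨[(u, v)], ?_, fun x _ => ?_⟩
  · intro r hr
    rcases List.mem_cons.1 hr with rfl | hr'
    · exact ⟨hu, hv⟩
    · exact absurd hr' List.not_mem_nil
  · show u x * v x = u x * v x + 0
    ring

end prodclosure

/- ### the inclusion lemma -/

lemma Cinf_incl (α β : EReal) (φ ψ q : ℝ → ℝ)
    (hq : ∀ x ∈ EI α β, φ x = q x * ψ x) (hqmem : q ∈ Cinf α β ψ) :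
    Cinf α β ψ ⊆ Cinf α β φ := by
  apply key α β φ (Cinf α β ψ)
  · exact fun g hg => Cinf_contExt hg
  · exact fun g hg => Cinf_diff hg
  · intro g hg
    refine ⟨fun x => q x * Xop ψ g x, mul_mem_Cinf hqmem (Xop_mem_Cinf hg), fun x hx => ?_⟩
    show φ x * deriv g x = q x * (ψ x * deriv g x)
    rw [hq x hx]; ring

/-- if `ψ : (α,β) → (0,∞)` is continuous, `φ/ψ` extends to a function on
`[α,β]` belonging to `C_ψ^{(∞)}`, and `ψ/φ` extends to a function on `[α,β]` belonging
to `C_φ^{(∞)}`, then `C_φ^{(∞)} = C_ψ^{(∞)}`. -/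
theorem Cphi_eq_Cpsi (α β : EReal) (hαβ : α < β) (φ : ℝ → ℝ)
    (hφc : ContinuousOn φ (EI α β)) (hφpos : ∀ x ∈ EI α β, 0 < φ x)
    (ψ : ℝ → ℝ) (hψc : ContinuousOn ψ (EI α β)) (hψpos : ∀ x ∈ EI α β, 0 < ψ x)
    (q : ℝ → ℝ) (hq : ∀ x ∈ EI α β, q x = φ x / ψ x) (hqmem : q ∈ Cinf α β ψ)
    (p : ℝ → ℝ) (hp : ∀ x ∈ EI α β, p x = ψ x / φ x) (hpmem : p ∈ Cinf α β φ) :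
    Cinf α β φ = Cinf α β ψ := by
  have hq' : ∀ x ∈ EI α β, φ x = q x * ψ x := fun x hx => by
    rw [hq x hx, div_mul_cancel₀ _ (hψpos x hx).ne']
  have hp' : ∀ x ∈ EI α β, ψ x = p x * φ x := fun x hx => by
    rw [hp x hx, div_mul_cancel₀ _ (hφpos x hx).ne']
  exact Set.Subset.antisymm (Cinf_incl α β ψ φ p hp' hpmem) (Cinf_incl α β φ ψ q hq' hqmem)
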